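/- Let G be a group and V a finite-dimensional real vector space with a simple representation of G (the only G-invariant real subspaces are 0 and V, and V ≠ 0). Then the complexification ℂ ⊗_ℝ V with the induced G-action is either simple as a complex representation of G, or there exist two G-invariant complex subspaces W₁ and W₂ of ℂ ⊗_ℝ V, each simple as a representation of G, with ℂ ⊗_ℝ V the internal direct sum of W₁ and W₂, and with W₂ equal to the image of W₁ under the conjugation map z ⊗ v ↦ z̄ ⊗ v. -/

import Mathlib

open scoped TensorProduct

/-- The complexification of a real representation: `G` acts on `ℂ ⊗[ℝ] V` by
`g • (z ⊗ v) = z ⊗ (g • v)`. -/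
noncomputable def Representation.complexify {G : Type*} [Group G] {V : Type*}
    [AddCommGroup V] [Module ℝ V] (ρ : Representation ℝ G V) :
    Representation ℂ G (ℂ ⊗[ℝ] V) :=
  ((Module.End.baseChangeHom ℝ ℂ V).toRingHom.toMonoidHom).comp ρ

/-- The conjugation map on `ℂ ⊗[ℝ] V`, sending `z ⊗ v` to `z̄ ⊗ v`. -/
noncomputable def tensorConj (V : Type*) [AddCommGroup V] [Module ℝ V] :
    (ℂ ⊗[ℝ] V) →ₗ[ℝ] (ℂ ⊗[ℝ] V) :=
  TensorProduct.map Complex.conjAe.toLinearMap LinearMap.id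

section Aux

variable {G : Type*} [Group G] {V : Type*} [AddCommGroup V] [Module ℝ V]

lemma complexify_tmul (ρ : Representation ℝ G V) (g : G) (z : ℂ) (v : V) :
    ρ.complexify g (z ⊗ₜ[ℝ] v) = z ⊗ₜ (ρ g v) := rfl

lemma tensorConj_tmul (z : ℂ) (v : V) :
    tensorConj V (z ⊗ₜ v) = (starRingEnd ℂ z) ⊗ₜ v := rfl

lemma tensorConj_smul (c : ℂ) (x : ℂ ⊗[ℝ] V) :
    tensorConj V (c • x) = (starRingEnd ℂ c) • tensorConj V x := by
  induction x using TensorProduct.induction_on with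
  | zero => simp
  | tmul z v => simp [TensorProduct.smul_tmul', tensorConj_tmul, map_mul]
  | add a b ha hb => simp [smul_add, ha, hb]

lemma tensorConj_conj (x : ℂ ⊗[ℝ] V) : tensorConj V (tensorConj V x) = x := by
  induction x using TensorProduct.induction_on with
  | zero => simp
  | tmul z v => simp [tensorConj_tmul]
  | add a b ha hb => simp [ha, hb]

lemma tensorConj_complexify (ρ : Representation ℝ G V) (g : G) (x : ℂ ⊗[ℝ] V) :
    tensorConj V (ρ.complexify g x) = ρ.complexify g (tensorConj V x) := by
  induction x using TensorProduct.induction_on with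
  | zero => simp
  | tmul z v => rfl
  | add a b ha hb => simp [map_add, ha, hb]

noncomputable def reBil : ℂ →ₗ[ℝ] V →ₗ[ℝ] V where
  toFun z := z.re • LinearMap.id
  map_add' a b := by ext v; simp [add_smul]
  map_smul' r z := by ext v; simp [smul_smul]

noncomputable def imBil : ℂ →ₗ[ℝ] V →ₗ[ℝ] V where
  toFun z := z.im • LinearMap.id
  map_add' a b := by ext v; simp [add_smul]
  map_smul' r z := by ext v; simp [smul_smul]

noncomputable def reL : (ℂ ⊗[ℝ] V) →ₗ[ℝ] V := TensorProduct.lift reBil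
noncomputable def imL : (ℂ ⊗[ℝ] V) →ₗ[ℝ] V := TensorProduct.lift imBil

lemma reL_tmul (z : ℂ) (v : V) : reL (z ⊗ₜ v) = z.re • v := rfl
lemma imL_tmul (z : ℂ) (v : V) : imL (z ⊗ₜ v) = z.im • v := rfl

lemma smul_one_tmul (r : ℝ) (v : V) :
    ((r : ℂ)) ⊗ₜ[ℝ] v = (1 : ℂ) ⊗ₜ[ℝ] (r • v) := by
  rw [TensorProduct.tmul_smul, TensorProduct.smul_tmul']
  norm_num

lemma decomp (x : ℂ ⊗[ℝ] V) :
    x = (1 : ℂ) ⊗ₜ (reL x) + Complex.I • ((1 : ℂ) ⊗ₜ (imL x)) := by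
  have key : (LinearMap.id : ℂ ⊗[ℝ] V →ₗ[ℝ] ℂ ⊗[ℝ] V) =
      (TensorProduct.mk ℝ ℂ V 1).comp reL +
      ((LinearMap.lsmul ℂ (ℂ ⊗[ℝ] V) Complex.I).restrictScalars ℝ).comp
        ((TensorProduct.mk ℝ ℂ V 1).comp imL) := by
    apply TensorProduct.ext'
    intro z v
    simp only [LinearMap.id_coe, id_eq, LinearMap.add_apply, LinearMap.comp_apply,
      TensorProduct.mk_apply, LinearMap.coe_restrictScalars, LinearMap.lsmul_apply,
      reL_tmul, imL_tmul, ← smul_one_tmul, TensorProduct.smul_tmul', smul_eq_mul, mul_one]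
    rw [← TensorProduct.add_tmul, mul_comm, Complex.re_add_im]
  conv_lhs => rw [← LinearMap.id_apply (R := ℝ) x, key]
  rfl

lemma reL_conj (x : ℂ ⊗[ℝ] V) : reL (tensorConj V x) = reL x := by
  induction x using TensorProduct.induction_on with
  | zero => simp
  | tmul z v => simp [tensorConj_tmul, reL_tmul]
  | add a b ha hb => simp [map_add, ha, hb]

lemma imL_conj (x : ℂ ⊗[ℝ] V) : imL (tensorConj V x) = - imL x := by
  induction x using TensorProduct.induction_on with
  | zero => simp
  | tmul z v => simp [tensorConj_tmul, imL_tmul]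
  | add a b ha hb => simp [map_add, ha, hb]; abel

lemma fixed_eq (x : ℂ ⊗[ℝ] V) (h : tensorConj V x = x) :
    x = (1 : ℂ) ⊗ₜ (reL x) := by
  have h1 := imL_conj x
  rw [h] at h1
  have h2 : imL x + imL x = 0 := by nth_rewrite 2 [h1]; simp
  have h3 : (2 : ℝ) • imL x = 0 := by rw [two_smul]; exact h2
  have him : imL x = 0 := by
    rcases smul_eq_zero.mp h3 with h4 | h4
    · norm_num at h4
    · exact h4
  conv_lhs => rw [decomp x]
  rw [him]
  simp

lemma conjStable_bot_or_top (ρ : Representation ℝ G V)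
    (hsimple : ∀ U : Submodule ℝ V, (∀ g, ∀ x ∈ U, ρ g x ∈ U) → U = ⊥ ∨ U = ⊤)
    (W : Submodule ℂ (ℂ ⊗[ℝ] V))
    (hinv : ∀ g, ∀ x ∈ W, ρ.complexify g x ∈ W)
    (hconj : ∀ x ∈ W, tensorConj V x ∈ W) :
    W = ⊥ ∨ W = ⊤ := by
  set U : Submodule ℝ V :=
    (W.restrictScalars ℝ).comap (TensorProduct.mk ℝ ℂ V 1) with hU
  have hUinv : ∀ g, ∀ v ∈ U, ρ g v ∈ U := by
    intro g v hv
    have : ρ.complexify g ((1 : ℂ) ⊗ₜ v) ∈ W := hinv g _ hv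
    simpa [complexify_tmul, hU] using this
  rcases hsimple U hUinv with hbot | htop
  · left
    rw [eq_bot_iff]
    intro x hx
    -- a = x + conj x  is fixed, b = I • (x - conj x) is fixed
    have hax : tensorConj V x ∈ W := hconj x hx
    set a := x + tensorConj V x with ha
    set b := Complex.I • (x - tensorConj V x) with hb
    have haW : a ∈ W := W.add_mem hx hax
    have hbW : b ∈ W := W.smul_mem _ (W.sub_mem hx hax)
    have hafix : tensorConj V a = a := by
      rw [ha, map_add, tensorConj_conj, add_comm]
    have hbfix : tensorConj V b = b := by
      rw [hb, tensorConj_smul, map_sub, tensorConj_conj, Complex.conj_I,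
        neg_smul, smul_sub, smul_sub, neg_sub]
    have haz : a = 0 := by
      have h1 : a = (1 : ℂ) ⊗ₜ (reL a) := fixed_eq a hafix
      have h2 : reL a ∈ U := by
        rw [hU]; simp only [Submodule.mem_comap, TensorProduct.mk_apply,
          Submodule.restrictScalars_mem]
        rw [← h1]; exact haW
      rw [hbot, Submodule.mem_bot] at h2
      rw [h1, h2, TensorProduct.tmul_zero]
    have hbz : b = 0 := by
      have h1 : b = (1 : ℂ) ⊗ₜ (reL b) := fixed_eq b hbfix
      have h2 : reL b ∈ U := by
        rw [hU]; simp only [Submodule.mem_comap, TensorProduct.mk_apply,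
          Submodule.restrictScalars_mem]
        rw [← h1]; exact hbW
      rw [hbot, Submodule.mem_bot] at h2
      rw [h1, h2, TensorProduct.tmul_zero]
    -- from a = 0 : conj x = -x ; then b = I • (2x)
    have hcx : tensorConj V x = -x := by
      have h0 : x + tensorConj V x = 0 := by rw [← ha]; exact haz
      exact eq_neg_of_add_eq_zero_right h0
    have h0 : Complex.I • (x - tensorConj V x) = 0 := by rw [← hb]; exact hbz
    rw [hcx, sub_neg_eq_add, ← two_smul ℂ, smul_smul] at h0
    rcases smul_eq_zero.mp h0 with h4 | h4
    · exfalso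
      have : Complex.I ≠ 0 := Complex.I_ne_zero
      have h2 : (2 : ℂ) ≠ 0 := two_ne_zero
      exact (mul_ne_zero this h2) h4
    · simpa using h4
  · right
    rw [eq_top_iff]
    intro x _
    have hre : (1 : ℂ) ⊗ₜ (reL x) ∈ W := by
      have : reL x ∈ U := htop ▸ Submodule.mem_top
      simpa [hU] using this
    have him : (1 : ℂ) ⊗ₜ (imL x) ∈ W := by
      have : imL x ∈ U := htop ▸ Submodule.mem_top
      simpa [hU] using this
    have := W.add_mem hre (W.smul_mem Complex.I him)
    rwa [← decomp x] at this

instance : RingHomSurjective (starRingEnd ℂ) :=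
  ⟨fun y => ⟨(starRingEnd ℂ) y, by simp⟩⟩

/-- `tensorConj` as a conjugate-semilinear map. -/
noncomputable def tensorConjSL (V : Type*) [AddCommGroup V] [Module ℝ V] :
    (ℂ ⊗[ℝ] V) →ₛₗ[starRingEnd ℂ] (ℂ ⊗[ℝ] V) where
  toFun := tensorConj V
  map_add' := map_add _
  map_smul' c x := tensorConj_smul c x

lemma tensorConjSL_apply (x : ℂ ⊗[ℝ] V) : tensorConjSL V x = tensorConj V x := rfl

noncomputable def conjSM (W : Submodule ℂ (ℂ ⊗[ℝ] V)) : Submodule ℂ (ℂ ⊗[ℝ] V) :=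
  W.map (tensorConjSL V)

lemma conjSM_coe (W : Submodule ℂ (ℂ ⊗[ℝ] V)) :
    (conjSM W : Set (ℂ ⊗[ℝ] V)) = tensorConj V '' (W : Set (ℂ ⊗[ℝ] V)) := rfl

lemma mem_conjSM {W : Submodule ℂ (ℂ ⊗[ℝ] V)} {x : ℂ ⊗[ℝ] V} :
    x ∈ conjSM W ↔ tensorConj V x ∈ W := by
  constructor
  · rintro ⟨y, hy, rfl⟩
    rwa [tensorConjSL_apply, tensorConj_conj]
  · intro h
    exact ⟨tensorConj V x, h, by rw [tensorConjSL_apply, tensorConj_conj]⟩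

lemma conjSM_conjSM (W : Submodule ℂ (ℂ ⊗[ℝ] V)) : conjSM (conjSM W) = W := by
  ext x
  rw [mem_conjSM, mem_conjSM, tensorConj_conj]

lemma conjSM_bot : conjSM (⊥ : Submodule ℂ (ℂ ⊗[ℝ] V)) = ⊥ := by
  ext x
  rw [mem_conjSM]
  simp only [Submodule.mem_bot]
  constructor
  · intro h
    have := congrArg (tensorConj V) h
    rwa [tensorConj_conj, map_zero] at this
  · rintro rfl; simp

lemma conjSM_inv (ρ : Representation ℝ G V) (W : Submodule ℂ (ℂ ⊗[ℝ] V))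
    (hinv : ∀ g, ∀ x ∈ W, ρ.complexify g x ∈ W) :
    ∀ g, ∀ x ∈ conjSM W, ρ.complexify g x ∈ conjSM W := by
  intro g x hx
  rw [mem_conjSM] at hx ⊢
  rw [tensorConj_complexify]
  exact hinv g _ hx

lemma conjSM_le {W W' : Submodule ℂ (ℂ ⊗[ℝ] V)} (h : W ≤ W') : conjSM W ≤ conjSM W' :=
  Submodule.map_mono h

/-- Existence of a minimal nonzero invariant subspace below a nonzero invariant one. -/
lemma exists_minimal [FiniteDimensional ℝ V] (ρ : Representation ℝ G V)
    (W : Submodule ℂ (ℂ ⊗[ℝ] V)) (hW : W ≠ ⊥)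
    (hinv : ∀ g, ∀ x ∈ W, ρ.complexify g x ∈ W) :
    ∃ W₁ : Submodule ℂ (ℂ ⊗[ℝ] V), W₁ ≤ W ∧ W₁ ≠ ⊥ ∧
      (∀ g, ∀ x ∈ W₁, ρ.complexify g x ∈ W₁) ∧
      (∀ U : Submodule ℂ (ℂ ⊗[ℝ] V), U ≤ W₁ →
        (∀ g, ∀ x ∈ U, ρ.complexify g x ∈ U) → U = ⊥ ∨ U = W₁) := by
  have hwf : WellFounded ((· < ·) : Submodule ℂ (ℂ ⊗[ℝ] V) → _ → Prop) :=
    IsWellFounded.wf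
  obtain ⟨W₁, ⟨hle, hne, hiv⟩, hmin⟩ := hwf.has_min
    {U | U ≤ W ∧ U ≠ ⊥ ∧ ∀ g, ∀ x ∈ U, ρ.complexify g x ∈ U}
    ⟨W, le_refl _, hW, hinv⟩
  refine ⟨W₁, hle, hne, hiv, ?_⟩
  intro U hU hUinv
  by_cases hUb : U = ⊥
  · exact Or.inl hUb
  · right
    by_contra hne2
    exact hmin U ⟨le_trans hU hle, hUb, hUinv⟩ (lt_of_le_of_ne hU hne2)


end Aux

/-- The complexification of a simple finite-dimensional real representation
is either simple, or the direct sum of two simple invariant subspaces `W₁`, `W₂` that are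
exchanged by the conjugation map `z ⊗ v ↦ z̄ ⊗ v`. -/
theorem complexify_of_simple {G : Type*} [Group G] {V : Type*} [AddCommGroup V]
    [Module ℝ V] [FiniteDimensional ℝ V] [Nontrivial V]
    (ρ : Representation ℝ G V)
    (hsimple : ∀ U : Submodule ℝ V, (∀ g, ∀ x ∈ U, ρ g x ∈ U) → U = ⊥ ∨ U = ⊤) :
    (Nontrivial (ℂ ⊗[ℝ] V) ∧ ∀ W : Submodule ℂ (ℂ ⊗[ℝ] V),
        (∀ g, ∀ x ∈ W, ρ.complexify g x ∈ W) → W = ⊥ ∨ W = ⊤) ∨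
    (∃ W₁ W₂ : Submodule ℂ (ℂ ⊗[ℝ] V),
      (∀ g, ∀ x ∈ W₁, ρ.complexify g x ∈ W₁) ∧
      (∀ g, ∀ x ∈ W₂, ρ.complexify g x ∈ W₂) ∧
      W₁ ≠ ⊥ ∧
      (∀ U : Submodule ℂ (ℂ ⊗[ℝ] V), U ≤ W₁ →
        (∀ g, ∀ x ∈ U, ρ.complexify g x ∈ U) → U = ⊥ ∨ U = W₁) ∧
      W₂ ≠ ⊥ ∧
      (∀ U : Submodule ℂ (ℂ ⊗[ℝ] V), U ≤ W₂ →
        (∀ g, ∀ x ∈ U, ρ.complexify g x ∈ U) → U = ⊥ ∨ U = W₂) ∧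
      W₁ ⊓ W₂ = ⊥ ∧ W₁ ⊔ W₂ = ⊤ ∧
      (W₂ : Set (ℂ ⊗[ℝ] V)) = tensorConj V '' (W₁ : Set (ℂ ⊗[ℝ] V))) := by
  by_cases hcs : ∀ W : Submodule ℂ (ℂ ⊗[ℝ] V),
      (∀ g, ∀ x ∈ W, ρ.complexify g x ∈ W) → W = ⊥ ∨ W = ⊤
  · left
    refine ⟨?_, hcs⟩
    have hpos : 0 < Module.finrank ℝ V := Module.finrank_pos
    let b := (Module.finBasis ℝ V).baseChange ℂ
    exact ⟨b ⟨0, hpos⟩, 0, b.ne_zero _⟩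
  · right
    push_neg at hcs
    obtain ⟨W, hWinv, hWbot, hWtop⟩ := hcs
    obtain ⟨W₁, hle, hne, hiv, hminim⟩ := exists_minimal ρ W hWbot hWinv
    have hW₁top : W₁ ≠ ⊤ := fun h => hWtop (top_le_iff.mp (h ▸ hle))
    set W₂ := conjSM W₁ with hW₂
    have hiv₂ := conjSM_inv ρ W₁ hiv
    have hne₂ : W₂ ≠ ⊥ := by
      intro h
      apply hne
      have := congrArg conjSM h
      rwa [conjSM_conjSM, conjSM_bot] at this
    have hmin₂ : ∀ U : Submodule ℂ (ℂ ⊗[ℝ] V), U ≤ W₂ →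
        (∀ g, ∀ x ∈ U, ρ.complexify g x ∈ U) → U = ⊥ ∨ U = W₂ := by
      intro U hU hUinv
      have h1 : conjSM U ≤ W₁ := by
        have := conjSM_le hU
        rwa [hW₂, conjSM_conjSM] at this
      rcases hminim (conjSM U) h1 (conjSM_inv ρ U hUinv) with h | h
      · left
        have := congrArg conjSM h
        rwa [conjSM_conjSM, conjSM_bot] at this
      · right
        have := congrArg conjSM h
        rwa [conjSM_conjSM] at this
    have hconj12 : ∀ x ∈ W₁, tensorConj V x ∈ W₂ := by
      intro x hx
      rw [hW₂, mem_conjSM, tensorConj_conj]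
      exact hx
    have hconj21 : ∀ x ∈ W₂, tensorConj V x ∈ W₁ := by
      intro x hx
      rw [hW₂, mem_conjSM] at hx
      exact hx
    have hinf : W₁ ⊓ W₂ = ⊥ := by
      rcases conjStable_bot_or_top ρ hsimple (W₁ ⊓ W₂)
          (fun g x hx => ⟨hiv g x hx.1, hiv₂ g x hx.2⟩)
          (fun x hx => ⟨hconj21 x hx.2, hconj12 x hx.1⟩) with h | h
      · exact h
      · exact absurd (top_le_iff.mp (h ▸ inf_le_left)) hW₁top
    have hsup : W₁ ⊔ W₂ = ⊤ := by
      rcases conjStable_bot_or_top ρ hsimple (W₁ ⊔ W₂)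
          (fun g x hx => by
            rw [Submodule.mem_sup] at hx ⊢
            obtain ⟨y, hy, z, hz, rfl⟩ := hx
            exact ⟨_, hiv g y hy, _, hiv₂ g z hz, (map_add _ _ _).symm⟩)
          (fun x hx => by
            rw [Submodule.mem_sup] at hx ⊢
            obtain ⟨y, hy, z, hz, rfl⟩ := hx
            exact ⟨_, hconj21 z hz, _, hconj12 y hy, by rw [map_add]; abel⟩) with h | h
      · exfalso
        exact hne (le_bot_iff.mp (h ▸ le_sup_left))
      · exact h
    exact ⟨W₁, W₂, hiv, hiv₂, hne, hminim, hne₂, hmin₂, hinf, hsup, conjSM_coe W₁⟩
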